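/- Let n ≥ 1. In the polynomial ring ℤ[t] one has Σ_{Ψ ∈ Υ} t^{|Ψ|} = ∏_{k=1}^{n} (1 + t^k); equivalently, for every i ≥ 0, the number of Ψ ∈ Υ with |Ψ| = i equals the coefficient of tⁱ in ∏_{k=1}^{n} (1 + t^k). -/

import Mathlib

open Pointwise Polynomial

/-- The `i`-th standard basis vector of `ℤⁿ`. -/
def stdBasis (n : ℕ) (i : Fin n) : Fin n → ℤ := Pi.single i 1

/-- The positive roots of type `Cₙ`: `eᵢ - eⱼ` for `i < j` and `eᵢ + eⱼ` for `i ≤ j`. -/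
def PhiPos (n : ℕ) : Set (Fin n → ℤ) :=
  {v | ∃ i j : Fin n, i < j ∧ v = stdBasis n i - stdBasis n j} ∪
  {v | ∃ i j : Fin n, i ≤ j ∧ v = stdBasis n i + stdBasis n j}

/-- The collection `Υ` of combinatorial abelian ideals. -/
def Upsilon (n : ℕ) : Set (Set (Fin n → ℤ)) :=
  {Ψ | Ψ ⊆ PhiPos n ∧ (Ψ + PhiPos n) ∩ PhiPos n ⊆ Ψ ∧ (Ψ + Ψ) ∩ PhiPos n = ∅}

section Aux
open Finset
variable {n : ℕ}

lemma stdBasis_apply (i x : Fin n) : stdBasis n i x = if x = i then 1 else 0 := by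
  simp [stdBasis, Pi.single_apply]

lemma sigma_std (i : Fin n) : ∑ x, stdBasis n i x = 1 := by
  simp [stdBasis_apply]

lemma sigma_phi {v : Fin n → ℤ} (h : v ∈ PhiPos n) : ∑ x, v x = 0 ∨ ∑ x, v x = 2 := by
  rcases h with ⟨i, j, _, rfl⟩ | ⟨i, j, _, rfl⟩
  · left; simp [Finset.sum_sub_distrib, sigma_std]
  · right; simp [Finset.sum_add_distrib, sigma_std]

lemma phi_sum_char {v : Fin n → ℤ} (h : v ∈ PhiPos n) (hs : ∑ x, v x = 2) :
    ∃ i j : Fin n, i ≤ j ∧ v = stdBasis n i + stdBasis n j := by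
  rcases h with ⟨i, j, _, rfl⟩ | ⟨i, j, hij, rfl⟩
  · simp [Finset.sum_sub_distrib, sigma_std] at hs
  · exact ⟨i, j, hij, rfl⟩

lemma mem_phi_sum {i j : Fin n} (h : i ≤ j) : stdBasis n i + stdBasis n j ∈ PhiPos n :=
  Or.inr ⟨i, j, h, rfl⟩

lemma mem_phi_sub {i j : Fin n} (h : i < j) : stdBasis n i - stdBasis n j ∈ PhiPos n :=
  Or.inl ⟨i, j, h, rfl⟩

lemma sum4_not_phi (i j k l : Fin n) :
    (stdBasis n i + stdBasis n j) + (stdBasis n k + stdBasis n l) ∉ PhiPos n := by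
  intro h
  rcases sigma_phi h with hs | hs <;>
    simp [Finset.sum_add_distrib, sigma_std] at hs
lemma std_inj {i j : Fin n} (h : stdBasis n i = stdBasis n j) : i = j := by
  have h1 := congrFun h j
  simp only [stdBasis_apply, if_pos rfl] at h1
  by_contra hne
  rw [if_neg (fun hh => hne hh.symm)] at h1
  norm_num at h1

lemma pair_eq {i j k l : Fin n} (hij : i ≤ j) (hkl : k ≤ l)
    (h : stdBasis n i + stdBasis n j = stdBasis n k + stdBasis n l) : i = k ∧ j = l := by
  by_cases hik : i = k
  · subst hik
    exact ⟨rfl, std_inj (add_left_cancel h)⟩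
  · exfalso
    have h1 := congrFun h i
    have h3 := congrFun h k
    simp only [Pi.add_apply, stdBasis_apply, if_pos rfl] at h1 h3
    rw [if_neg hik] at h1
    by_cases hil : i = l
    · have hki : k < i := lt_of_le_of_ne (hil ▸ hkl) (Ne.symm hik)
      have hkj : k ≠ j := ne_of_lt (lt_of_lt_of_le hki hij)
      rw [if_neg (fun hh : (k:Fin n) = i => hik hh.symm), if_neg hkj,
        if_neg (fun hh : (k:Fin n) = l => hik (hil.trans hh.symm))] at h3
      · norm_num at h3
    · rw [if_neg hil] at h1
      by_cases hij2 : i = j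
      · rw [if_pos hij2] at h1; norm_num at h1
      · rw [if_neg hij2] at h1; norm_num at h1

def gS (n : ℕ) (S : Finset (Fin n)) (d : ℕ) : ℕ := (S.filter (fun s => d ≤ s.val)).card



lemma gS_anti {d d' : ℕ} (h : d ≤ d') : gS n S d' ≤ gS n S d := by
  apply Finset.card_le_card
  intro s hs
  simp only [Finset.mem_filter] at hs ⊢
  exact ⟨hs.1, le_trans h hs.2⟩

lemma gS_step (d : ℕ) : gS n S d ≤ gS n S (d + 1) + 1 := by
  classical
  have hsub : S.filter (fun s => d ≤ s.val) ⊆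
      S.filter (fun s => d + 1 ≤ s.val) ∪ S.filter (fun s => s.val = d) := by
    intro s hs
    simp only [Finset.mem_filter, Finset.mem_union] at hs ⊢
    by_cases hgt : d + 1 ≤ s.val
    · exact Or.inl ⟨hs.1, hgt⟩
    · exact Or.inr ⟨hs.1, by omega⟩
  have h1 : (S.filter (fun s => s.val = d)).card ≤ 1 := by
    apply Finset.card_le_one.mpr
    intro a ha b hb
    simp only [Finset.mem_filter] at ha hb
    exact Fin.ext (ha.2.trans hb.2.symm)
  calc gS n S d ≤ _ := Finset.card_le_card hsub
    _ ≤ _ + _ := Finset.card_union_le _ _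
    _ ≤ gS n S (d+1) + 1 := Nat.add_le_add_left h1 _

lemma gS_le (d : ℕ) : gS n S d ≤ n - d := by
  have h := Finset.card_le_card_of_injOn (s := S.filter (fun s => d ≤ s.val))
    (t := Finset.range (n - d)) (fun s : Fin n => s.val - d)
    (fun a ha => by
      simp only [Finset.coe_filter, Finset.mem_filter, Set.mem_setOf_eq] at ha
      have := a.isLt
      simp only [Finset.coe_range, Set.mem_Iio]
      omega)
    (fun a ha b hb hab => by
      simp only [Finset.coe_filter, Set.mem_setOf_eq] at ha hb
      have hab' : a.val - d = b.val - d := hab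
      exact Fin.ext (by omega))
  simpa [gS] using h

lemma gS_le_add (e d : ℕ) : gS n S d ≤ gS n S (d + e) + e := by
  induction e with
  | zero => simp
  | succ m ih =>
    have h1 := gS_step (n := n) (S := S) (d + m)
    have h2 : d + (m + 1) = (d + m) + 1 := by omega
    rw [h2]
    omega

lemma gS_le' (d d' : ℕ) : gS n S d ≤ gS n S d' + (d' - d) := by
  rcases le_total d d' with h | h
  · have := gS_le_add (n := n) (S := S) (d' - d) d
    rw [Nat.add_sub_cancel' h] at this
    exact this
  · have := gS_anti (n := n) (S := S) h
    omega

lemma gS_closed {i j i' j' : ℕ} (hij : i ≤ j) (hi'j' : i' ≤ j') (hii : i' ≤ i) (hjj : j' ≤ j)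
    (h : i < gS n S (j - i)) : i' < gS n S (j' - i') := by
  have h1 := gS_le' (n := n) (S := S) (j - i) (j' - i')
  have h2 := gS_le' (n := n) (S := S) (j' - i') (j - i)
  omega
def FS (n : ℕ) (S : Finset (Fin n)) : Set (Fin n → ℤ) :=
  {v | ∃ i j : Fin n, i ≤ j ∧ i.val < gS n S (j.val - i.val) ∧
    v = stdBasis n i + stdBasis n j}

lemma mem_FS {S : Finset (Fin n)} {i j : Fin n} (hij : i ≤ j) :
    stdBasis n i + stdBasis n j ∈ FS n S ↔ i.val < gS n S (j.val - i.val) := by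
  constructor
  · rintro ⟨a, b, hab, hlt, heq⟩
    obtain ⟨rfl, rfl⟩ := pair_eq hab hij heq.symm
    exact hlt
  · intro h
    exact ⟨i, j, hij, h, rfl⟩

lemma FS_subset (S : Finset (Fin n)) : FS n S ⊆ PhiPos n := by
  rintro v ⟨i, j, hij, _, rfl⟩
  exact mem_phi_sum hij

lemma FS_mem_Upsilon (S : Finset (Fin n)) : FS n S ∈ Upsilon n := by
  refine ⟨FS_subset S, ?_, ?_⟩
  · -- ideal property
    rintro w ⟨⟨u, hu, α, hα, rfl⟩, hw⟩
    obtain ⟨i, j, hij, hgi, rfl⟩ := hu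
    rcases hα with ⟨k, l, hkl, rfl⟩ | ⟨k, l, hkl, rfl⟩
    · -- α = e_k - e_l, k < l
      -- first, w has coordinate sum 2, so it is a sum root e_a + e_b
      have hσ : ∑ x, (stdBasis n i + stdBasis n j + (stdBasis n k - stdBasis n l)) x = 2 := by
        simp [Finset.sum_add_distrib, Finset.sum_sub_distrib, sigma_std]
      obtain ⟨a, b, hab, habeq⟩ := phi_sum_char hw hσ
      -- show l = i or l = j
      have hl : l = i ∨ l = j := by
        by_contra hcon
        push_neg at hcon
        have hcoord := congrFun habeq l
        have hkl' : l ≠ k := Ne.symm (ne_of_lt hkl)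
        simp only [Pi.add_apply, Pi.sub_apply, stdBasis_apply, if_pos rfl,
          if_neg hcon.1, if_neg hcon.2, if_neg hkl'] at hcoord
        by_cases h1 : l = a <;> by_cases h2 : l = b <;>
          simp [h1, h2] at hcoord <;> omega
      rcases hl with h | h
      · subst h
        -- l = i : k < l ≤ j, result is e_k + e_j
        have heq2 : stdBasis n l + stdBasis n j + (stdBasis n k - stdBasis n l)
            = stdBasis n k + stdBasis n j := by abel
        beta_reduce
        rw [heq2]
        have hkj : k ≤ j := le_trans (le_of_lt hkl) hij
        rw [mem_FS hkj]
        exact gS_closed (Fin.le_def.mp hij) (Fin.le_def.mp hkj)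
          (le_of_lt (Fin.lt_def.mp hkl)) le_rfl hgi
      · subst h
        -- l = j : k < l, result is e_i + e_k
        have heq2 : stdBasis n i + stdBasis n l + (stdBasis n k - stdBasis n l)
            = stdBasis n i + stdBasis n k := by abel
        beta_reduce
        rw [heq2]
        rcases le_total i k with hik | hik
        · rw [mem_FS hik]
          exact gS_closed (Fin.le_def.mp hij) (Fin.le_def.mp hik) le_rfl
            (le_of_lt (Fin.lt_def.mp hkl)) hgi
        · rw [add_comm, mem_FS hik]
          exact gS_closed (Fin.le_def.mp hij) (Fin.le_def.mp hik)
            (Fin.le_def.mp hik) (Fin.le_def.mp hij) hgi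
    · -- α = e_k + e_l : coordinate sum 4, impossible
      exfalso
      rcases sigma_phi hw with hs | hs <;>
        simp [Finset.sum_add_distrib, sigma_std] at hs
  · -- abelian
    rw [Set.eq_empty_iff_forall_notMem]
    rintro w ⟨⟨u, hu, u', hu', rfl⟩, hw⟩
    obtain ⟨i, j, _, _, rfl⟩ := hu
    obtain ⟨k, l, _, _, rfl⟩ := hu'
    exact sum4_not_phi i j k l hw
open scoped Classical in
noncomputable def TS (n : ℕ) (S : Finset (Fin n)) : Finset (Fin n × Fin n) :=
  Finset.univ.filter (fun p => p.1 ≤ p.2 ∧ p.1.val < gS n S (p.2.val - p.1.val))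

open scoped Classical in
lemma mem_TS {S : Finset (Fin n)} {p : Fin n × Fin n} :
    p ∈ TS n S ↔ p.1 ≤ p.2 ∧ p.1.val < gS n S (p.2.val - p.1.val) := by
  simp [TS]

lemma card_TS (S : Finset (Fin n)) : (TS n S).card = ∑ s ∈ S, (s.val + 1) := by
  classical
  have h1 : (TS n S).card = ((Finset.range n).sigma
      (fun d => Finset.range (gS n S d))).card := by
    apply Finset.card_bij' (fun p _ => (⟨p.2.val - p.1.val, p.1.val⟩ : (_ : ℕ) × ℕ))
      (fun q hq => ((⟨q.2, by
          simp only [Finset.mem_sigma, Finset.mem_range] at hq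
          have := gS_le (n := n) (S := S) q.1
          omega⟩ : Fin n), (⟨q.2 + q.1, by
          simp only [Finset.mem_sigma, Finset.mem_range] at hq
          have := gS_le (n := n) (S := S) q.1
          omega⟩ : Fin n)))
    case hi =>
      intro p hp
      rw [mem_TS] at hp
      simp only [Finset.mem_sigma, Finset.mem_range]
      refine ⟨?_, hp.2⟩
      have := p.2.isLt
      omega
    case hj =>
      intro q hq
      have hq' := hq
      simp only [Finset.mem_sigma, Finset.mem_range] at hq'
      have hb := gS_le (n := n) (S := S) q.1
      apply mem_TS.mpr
      constructor
      · rw [Fin.le_def]; simp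
      · simpa using hq'.2
    case left_inv =>
      intro p hp
      have hp' := mem_TS.mp hp
      have h := Fin.le_def.mp hp'.1
      refine Prod.ext (Fin.ext ?_) (Fin.ext ?_) <;> simp <;> omega
    case right_inv =>
      intro q hq
      simp only [Finset.mem_sigma, Finset.mem_range] at hq
      refine Sigma.ext ?_ (heq_of_eq ?_) <;> simp
  rw [h1, Finset.card_sigma]
  simp only [Finset.card_range]
  have h2 : ∀ d, gS n S d = ∑ s ∈ S, if d ≤ s.val then 1 else 0 := fun d => by
    rw [gS, Finset.card_filter]
  calc ∑ d ∈ Finset.range n, gS n S d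
      = ∑ d ∈ Finset.range n, ∑ s ∈ S, if d ≤ s.val then 1 else 0 := by
        exact Finset.sum_congr rfl (fun d _ => h2 d)
    _ = ∑ s ∈ S, ∑ d ∈ Finset.range n, if d ≤ s.val then 1 else 0 := Finset.sum_comm
    _ = ∑ s ∈ S, (s.val + 1) := by
        apply Finset.sum_congr rfl
        intro s _
        rw [← Finset.card_filter]
        have : (Finset.range n).filter (fun d => d ≤ s.val) = Finset.range (s.val + 1) := by
          ext d
          simp only [Finset.mem_filter, Finset.mem_range]
          have := s.isLt
          omega
        rw [this, Finset.card_range]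

lemma FS_eq_coe (S : Finset (Fin n)) :
    FS n S = ↑((TS n S).image (fun p => stdBasis n p.1 + stdBasis n p.2)) := by
  ext v
  simp only [Finset.coe_image, Set.mem_image, Finset.mem_coe]
  constructor
  · rintro ⟨i, j, hij, hlt, rfl⟩
    exact ⟨(i, j), mem_TS.mpr ⟨hij, hlt⟩, rfl⟩
  · rintro ⟨p, hp, rfl⟩
    rw [mem_TS] at hp
    exact ⟨p.1, p.2, hp.1, hp.2, rfl⟩

lemma ncard_FS (S : Finset (Fin n)) : (FS n S).ncard = ∑ s ∈ S, (s.val + 1) := by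
  rw [FS_eq_coe, Set.ncard_coe_finset, Finset.card_image_of_injOn, card_TS]
  intro p hp q hq heq
  simp only [Finset.mem_coe, mem_TS] at hp hq
  obtain ⟨h1, h2⟩ := pair_eq hp.1 hq.1 heq
  exact Prod.ext h1 h2
section PsiStruct
open scoped Classical

lemma mk_le_iff {a : ℕ} {h : a < n} {j : Fin n} : (⟨a, h⟩ : Fin n) ≤ j ↔ a ≤ j.val := Iff.rfl
lemma le_mk_iff {a : ℕ} {h : a < n} {j : Fin n} : j ≤ (⟨a, h⟩ : Fin n) ↔ j.val ≤ a := Iff.rfl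

lemma psi_elt {Ψ : Set (Fin n → ℤ)} (hΨ : Ψ ∈ Upsilon n) {v : Fin n → ℤ} (hv : v ∈ Ψ) :
    ∃ i j : Fin n, i ≤ j ∧ v = stdBasis n i + stdBasis n j := by
  rcases hΨ.1 hv with ⟨i, j, hij, rfl⟩ | ⟨i, j, hij, rfl⟩
  · exfalso
    have heq : (stdBasis n i - stdBasis n j) + (stdBasis n j + stdBasis n j)
        = stdBasis n i + stdBasis n j := by abel
    have h1 : stdBasis n i + stdBasis n j ∈ Ψ := by
      have := hΨ.2.1 (Set.mem_inter
        (Set.add_mem_add hv (mem_phi_sum (le_refl j)))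
        (by rw [heq]; exact mem_phi_sum hij.le))
      rwa [heq] at this
    have heq2 : (stdBasis n i - stdBasis n j) + (stdBasis n i + stdBasis n j)
        = stdBasis n i + stdBasis n i := by abel
    have h2 : (stdBasis n i - stdBasis n j) + (stdBasis n i + stdBasis n j)
        ∈ (Ψ + Ψ) ∩ PhiPos n :=
      Set.mem_inter (Set.add_mem_add hv h1) (by rw [heq2]; exact mem_phi_sum (le_refl i))
    rw [hΨ.2.2] at h2
    exact h2
  · exact ⟨i, j, hij, rfl⟩

lemma psi_lowJ {Ψ : Set (Fin n → ℤ)} (hΨ : Ψ ∈ Upsilon n) {i j k : Fin n}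
    (hik : i ≤ k) (hkj : k < j) (hmem : stdBasis n i + stdBasis n j ∈ Ψ) :
    stdBasis n i + stdBasis n k ∈ Ψ := by
  have heq : (stdBasis n i + stdBasis n j) + (stdBasis n k - stdBasis n j)
      = stdBasis n i + stdBasis n k := by abel
  have := hΨ.2.1 (Set.mem_inter
    (Set.add_mem_add hmem (mem_phi_sub hkj))
    (by rw [heq]; exact mem_phi_sum hik))
  rwa [heq] at this

lemma psi_lowI {Ψ : Set (Fin n → ℤ)} (hΨ : Ψ ∈ Upsilon n) {i j k : Fin n}
    (hki : k < i) (hij : i ≤ j) (hmem : stdBasis n i + stdBasis n j ∈ Ψ) :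
    stdBasis n k + stdBasis n j ∈ Ψ := by
  have heq : (stdBasis n i + stdBasis n j) + (stdBasis n k - stdBasis n i)
      = stdBasis n k + stdBasis n j := by abel
  have := hΨ.2.1 (Set.mem_inter
    (Set.add_mem_add hmem (mem_phi_sub hki))
    (by rw [heq]; exact mem_phi_sum (le_trans hki.le hij)))
  rwa [heq] at this

lemma psi_lower {Ψ : Set (Fin n → ℤ)} (hΨ : Ψ ∈ Upsilon n) {i j i' j' : Fin n}
    (hij : i ≤ j) (hmem : stdBasis n i + stdBasis n j ∈ Ψ)
    (h1 : i' ≤ i) (h2 : j' ≤ j) (h3 : i' ≤ j') :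
    stdBasis n i' + stdBasis n j' ∈ Ψ := by
  rcases le_or_gt i j' with h | h
  · -- i ≤ j' : lower j to j', then i to i'
    have step1 : stdBasis n i + stdBasis n j' ∈ Ψ := by
      rcases eq_or_lt_of_le h2 with rfl | hlt
      · exact hmem
      · exact psi_lowJ hΨ h hlt hmem
    rcases eq_or_lt_of_le h1 with rfl | hlt
    · exact step1
    · exact psi_lowI hΨ hlt h step1
  · -- j' < i : lower i to i' first, then j to j'
    have step1 : stdBasis n i' + stdBasis n j ∈ Ψ :=
      psi_lowI hΨ (lt_of_le_of_lt h3 h) hij hmem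
    rcases eq_or_lt_of_le h2 with rfl | hlt
    · exact step1
    · exact psi_lowJ hΨ h3 hlt step1

lemma fin_prefix {P : Fin n → Prop} [DecidablePred P] (hP : ∀ x y : Fin n, x ≤ y → P y → P x) (i : Fin n) :
    P i ↔ i.val < (Finset.univ.filter P).card := by
  constructor
  · intro hPi
    have hsub : Finset.Iic i ⊆ Finset.univ.filter P := fun x hx =>
      Finset.mem_filter.mpr ⟨Finset.mem_univ x, hP x i (Finset.mem_Iic.mp hx) hPi⟩
    have := Finset.card_le_card hsub
    rw [Fin.card_Iic] at this
    omega
  · intro hlt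
    by_contra hPi
    have hsub : Finset.univ.filter P ⊆ Finset.Iio i := fun x hx =>
      Finset.mem_Iio.mpr (lt_of_not_ge fun hle => hPi (hP i x hle (Finset.mem_filter.mp hx).2))
    have := Finset.card_le_card hsub
    rw [Fin.card_Iio] at this
    omega

noncomputable def gPsi (Ψ : Set (Fin n → ℤ)) (d : ℕ) : ℕ :=
  (Finset.univ.filter (fun i : Fin n =>
    ∃ j : Fin n, j.val = i.val + d ∧ stdBasis n i + stdBasis n j ∈ Ψ)).card

lemma psi_pred_lower {Ψ : Set (Fin n → ℤ)} (hΨ : Ψ ∈ Upsilon n) (d : ℕ) :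
    ∀ x y : Fin n, x ≤ y →
      (∃ j : Fin n, j.val = y.val + d ∧ stdBasis n y + stdBasis n j ∈ Ψ) →
      (∃ j : Fin n, j.val = x.val + d ∧ stdBasis n x + stdBasis n j ∈ Ψ) := by
  rintro x y hxy ⟨j, hj, hm⟩
  have hxd : x.val + d < n := by have := j.isLt; have := Fin.le_def.mp hxy; omega
  refine ⟨⟨x.val + d, hxd⟩, rfl, ?_⟩
  have hxy' := Fin.le_def.mp hxy
  exact psi_lower hΨ (Fin.le_def.mpr (by omega : y.val ≤ j.val)) hm hxy
    (mk_le_iff.mpr (by omega)) (le_mk_iff.mpr (by omega))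

lemma gPsi_prefix {Ψ : Set (Fin n → ℤ)} (hΨ : Ψ ∈ Upsilon n) (d : ℕ) (i : Fin n) :
    (∃ j : Fin n, j.val = i.val + d ∧ stdBasis n i + stdBasis n j ∈ Ψ) ↔ i.val < gPsi Ψ d := by
  unfold gPsi
  exact fin_prefix (psi_pred_lower hΨ d) i

lemma psi_mem_iff {Ψ : Set (Fin n → ℤ)} (hΨ : Ψ ∈ Upsilon n) {d : ℕ} {i j : Fin n}
    (hj : j.val = i.val + d) :
    stdBasis n i + stdBasis n j ∈ Ψ ↔ i.val < gPsi Ψ d := by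
  rw [← gPsi_prefix hΨ d i]
  constructor
  · intro h; exact ⟨j, hj, h⟩
  · rintro ⟨j', hj', hm⟩
    have : j' = j := Fin.ext (by omega)
    rwa [this] at hm

lemma gPsi_le (Ψ : Set (Fin n → ℤ)) (d : ℕ) : gPsi Ψ d ≤ n := by
  have := Finset.card_filter_le (Finset.univ : Finset (Fin n))
    (fun i : Fin n => ∃ j : Fin n, j.val = i.val + d ∧ stdBasis n i + stdBasis n j ∈ Ψ)
  simpa [gPsi] using this

lemma gPsi_zero {Ψ : Set (Fin n → ℤ)} {d : ℕ} (hd : n ≤ d) : gPsi Ψ d = 0 := by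
  rw [gPsi, Finset.card_eq_zero, Finset.filter_eq_empty_iff]
  rintro i _ ⟨j, hj, _⟩
  have := j.isLt
  omega

lemma gPsi_anti {Ψ : Set (Fin n → ℤ)} (hΨ : Ψ ∈ Upsilon n) (d : ℕ) :
    gPsi Ψ (d + 1) ≤ gPsi Ψ d := by
  apply Finset.card_le_card
  intro i hi
  simp only [Finset.mem_filter, Finset.mem_univ, true_and] at hi ⊢
  obtain ⟨j, hj, hm⟩ := hi
  have hlt : i.val + d < n := by have := j.isLt; omega
  refine ⟨⟨i.val + d, hlt⟩, rfl, ?_⟩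
  exact psi_lower hΨ (Fin.le_def.mpr (by omega : i.val ≤ j.val)) hm le_rfl
    (mk_le_iff.mpr (by omega)) (le_mk_iff.mpr (by omega))

lemma gPsi_le' {Ψ : Set (Fin n → ℤ)} (hΨ : Ψ ∈ Upsilon n) (d : ℕ) : gPsi Ψ d ≤ n - d := by
  by_contra hc
  push_neg at hc
  have hle := gPsi_le Ψ d
  have h1 : gPsi Ψ d - 1 < n := by omega
  obtain ⟨j, hj, -⟩ := (gPsi_prefix hΨ d ⟨gPsi Ψ d - 1, h1⟩).mpr (by simp; omega)
  have := j.isLt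
  simp only [Fin.val_mk] at hj
  omega

lemma gPsi_step {Ψ : Set (Fin n → ℤ)} (hΨ : Ψ ∈ Upsilon n) (d : ℕ) :
    gPsi Ψ d ≤ gPsi Ψ (d + 1) + 1 := by
  by_contra hcon
  push_neg at hcon
  have hle := gPsi_le' hΨ d
  set m := gPsi Ψ (d + 1) + 1 with hm
  have hmn : m < n := by omega
  obtain ⟨j, hj, hmem⟩ := (gPsi_prefix hΨ d ⟨m, hmn⟩).mpr (by simp; omega)
  simp only [Fin.val_mk] at hj
  have hm' : stdBasis n (⟨m - 1, by omega⟩ : Fin n) + stdBasis n j ∈ Ψ :=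
    psi_lower hΨ (mk_le_iff.mpr (by omega)) hmem
      (Fin.mk_le_mk.mpr (by omega)) le_rfl (mk_le_iff.mpr (by omega))
  have := (psi_mem_iff hΨ (d := d + 1) (i := (⟨m - 1, by omega⟩ : Fin n)) (j := j)
    (by simp; omega)).mp hm'
  simp only [Fin.val_mk] at this
  omega

end PsiStruct
section Tele
open scoped Classical

lemma gS_split (S : Finset (Fin n)) {d : ℕ} (hd : d < n) :
    gS n S d = gS n S (d + 1) + (if (⟨d, hd⟩ : Fin n) ∈ S then 1 else 0) := by
  classical
  have hunion : S.filter (fun s => d ≤ s.val)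
      = (S.filter (fun s => d + 1 ≤ s.val)) ∪ (S.filter (fun s => s.val = d)) := by
    ext s
    simp only [Finset.mem_filter, Finset.mem_union]
    constructor
    · rintro ⟨h1, h2⟩
      by_cases h : d + 1 ≤ s.val
      · exact Or.inl ⟨h1, h⟩
      · exact Or.inr ⟨h1, by omega⟩
    · rintro (⟨h1, h2⟩ | ⟨h1, h2⟩) <;> exact ⟨h1, by omega⟩
  have hdisj : Disjoint (S.filter (fun s => d + 1 ≤ s.val)) (S.filter (fun s => s.val = d)) := by
    rw [Finset.disjoint_left]
    intro s h1 h2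
    simp only [Finset.mem_filter] at h1 h2
    omega
  have heq : S.filter (fun s => s.val = d)
      = if (⟨d, hd⟩ : Fin n) ∈ S then {(⟨d, hd⟩ : Fin n)} else ∅ := by
    split_ifs with h
    · ext s
      simp only [Finset.mem_filter, Finset.mem_singleton]
      constructor
      · rintro ⟨h1, h2⟩; exact Fin.ext h2
      · rintro rfl; exact ⟨h, rfl⟩
    · rw [Finset.filter_eq_empty_iff]
      rintro s hs h2
      exact h ((Fin.ext h2 : s = ⟨d, hd⟩) ▸ hs)
  rw [gS, hunion, Finset.card_union_of_disjoint hdisj, heq]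
  congr 1
  split_ifs <;> simp

lemma gS_split_mem {S : Finset (Fin n)} {d : ℕ} {hd : d < n} (h : (⟨d, hd⟩ : Fin n) ∈ S) :
    gS n S d = gS n S (d + 1) + 1 := by
  rw [gS_split S hd, if_pos h]

lemma gS_split_not {S : Finset (Fin n)} {d : ℕ} {hd : d < n} (h : (⟨d, hd⟩ : Fin n) ∉ S) :
    gS n S d = gS n S (d + 1) := by
  rw [gS_split S hd, if_neg h, Nat.add_zero]

noncomputable def SPsi (Ψ : Set (Fin n → ℤ)) : Finset (Fin n) :=
  Finset.univ.filter (fun s => gPsi Ψ (s.val + 1) < gPsi Ψ s.val)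

lemma mem_SPsi {Ψ : Set (Fin n → ℤ)} {s : Fin n} :
    s ∈ SPsi Ψ ↔ gPsi Ψ (s.val + 1) < gPsi Ψ s.val := by
  simp [SPsi]

lemma gS_zero {S : Finset (Fin n)} {d : ℕ} (hd : n ≤ d) : gS n S d = 0 := by
  have := gS_le (n := n) (S := S) d
  omega

lemma gS_SPsi {Ψ : Set (Fin n → ℤ)} (hΨ : Ψ ∈ Upsilon n) :
    ∀ t d, n ≤ d + t → gS n (SPsi Ψ) d = gPsi Ψ d := by
  intro t
  induction t with
  | zero => intro d hd; rw [gS_zero (by omega), gPsi_zero (by omega)]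
  | succ t ih =>
    intro d hd
    by_cases h : n ≤ d + t
    · exact ih d h
    · have hdn : d < n := by omega
      have h2 := ih (d + 1) (by omega)
      have h3 := gPsi_anti hΨ d
      have h4 := gPsi_step hΨ d
      by_cases h5 : gPsi Ψ (d + 1) < gPsi Ψ d
      · rw [gS_split_mem (hd := hdn) (mem_SPsi.mpr h5), h2]
        omega
      · rw [gS_split_not (hd := hdn) (fun hc => h5 (mem_SPsi.mp hc)), h2]
        omega

lemma psi_eq_FS {Ψ : Set (Fin n → ℤ)} (hΨ : Ψ ∈ Upsilon n) : Ψ = FS n (SPsi Ψ) := by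
  have hg : ∀ d, gS n (SPsi Ψ) d = gPsi Ψ d := fun d => gS_SPsi hΨ n d (by omega)
  ext v
  constructor
  · intro hv
    obtain ⟨i, j, hij, rfl⟩ := psi_elt hΨ hv
    rw [mem_FS hij, hg]
    have hd : j.val = i.val + (j.val - i.val) := by
      have := Fin.le_def.mp hij; omega
    exact (psi_mem_iff hΨ hd).mp hv
  · rintro ⟨i, j, hij, hlt, rfl⟩
    rw [hg] at hlt
    have hd : j.val = i.val + (j.val - i.val) := by
      have := Fin.le_def.mp hij; omega
    exact (psi_mem_iff hΨ hd).mpr hlt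

lemma FS_le_of_eq {A B : Finset (Fin n)} (h : FS n A = FS n B) (d : ℕ) :
    gS n A d ≤ gS n B d := by
  by_contra hc
  push_neg at hc
  have hle := gS_le (n := n) (S := A) d
  have hmem : stdBasis n (⟨gS n B d, by omega⟩ : Fin n)
      + stdBasis n (⟨gS n B d + d, by omega⟩ : Fin n) ∈ FS n A := by
    rw [mem_FS (Fin.mk_le_mk.mpr (by omega))]
    simp only [Fin.val_mk]
    have hdd : gS n B d + d - gS n B d = d := by omega
    rw [hdd]
    exact hc
  rw [h, mem_FS (Fin.mk_le_mk.mpr (by omega))] at hmem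
  simp only [Fin.val_mk] at hmem
  have hdd : gS n B d + d - gS n B d = d := by omega
  rw [hdd] at hmem
  exact lt_irrefl _ hmem

lemma FS_inj {A B : Finset (Fin n)} (h : FS n A = FS n B) : A = B := by
  have hg : ∀ d, gS n A d = gS n B d := fun d =>
    le_antisymm (FS_le_of_eq h d) (FS_le_of_eq h.symm d)
  ext s
  have h3 := hg s.val
  have h4 := hg (s.val + 1)
  constructor
  · intro hA
    by_contra hB
    have h1 := gS_split_mem (S := A) (hd := s.isLt) (by rwa [Fin.eta])
    have h2 := gS_split_not (S := B) (hd := s.isLt) (by rwa [Fin.eta])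
    omega
  · intro hB
    by_contra hA
    have h1 := gS_split_not (S := A) (hd := s.isLt) (by rwa [Fin.eta])
    have h2 := gS_split_mem (S := B) (hd := s.isLt) (by rwa [Fin.eta])
    omega
end Tele
end Aux
section Final
open scoped Classical

lemma prod_eq (n : ℕ) : (∏ k ∈ Finset.range n, (1 + (X : ℤ[X]) ^ (k + 1)))
    = ∑ S ∈ (Finset.univ : Finset (Fin n)).powerset, X ^ (∑ s ∈ S, (s.val + 1)) := by
  rw [← Fin.prod_univ_eq_prod_range (fun k => 1 + (X : ℤ[X]) ^ (k + 1)) n]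
  rw [Finset.prod_congr rfl
    (fun (i : Fin n) _ => add_comm (1 : ℤ[X]) ((X : ℤ[X]) ^ (i.val + 1)))]
  rw [Finset.prod_add]
  apply Finset.sum_congr rfl
  intro S _
  rw [Finset.prod_const_one, mul_one, Finset.prod_pow_eq_pow_sum]

lemma coeff_eq (n i : ℕ) :
    (∏ k ∈ Finset.range n, (1 + (X : ℤ[X]) ^ (k + 1))).coeff i
    = (((Finset.univ : Finset (Finset (Fin n))).filter
        (fun S => i = ∑ s ∈ S, (s.val + 1))).card : ℤ) := by
  rw [prod_eq, Polynomial.finset_sum_coeff]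
  simp only [Polynomial.coeff_X_pow]
  rw [Finset.powerset_univ, Finset.sum_boole]

lemma count_eq (n i : ℕ) : Set.ncard {Ψ | Ψ ∈ Upsilon n ∧ Ψ.ncard = i}
    = ((Finset.univ : Finset (Finset (Fin n))).filter
        (fun S => i = ∑ s ∈ S, (s.val + 1))).card := by
  have hset : {Ψ | Ψ ∈ Upsilon n ∧ Ψ.ncard = i}
      = (FS n) '' {S : Finset (Fin n) | i = ∑ s ∈ S, (s.val + 1)} := by
    ext Ψ
    constructor
    · rintro ⟨hU, hcard⟩
      refine ⟨SPsi Ψ, ?_, (psi_eq_FS hU).symm⟩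
      have h1 := ncard_FS (SPsi Ψ)
      rw [← psi_eq_FS hU] at h1
      simp only [Set.mem_setOf_eq]
      omega
    · rintro ⟨S, hS, rfl⟩
      refine ⟨FS_mem_Upsilon S, ?_⟩
      rw [ncard_FS]
      exact hS.symm
  rw [hset, Set.ncard_image_of_injective _ (fun A B h => FS_inj h),
    Set.ncard_eq_toFinset_card', Set.toFinset_setOf]

end Final

/-- For every `i ≥ 0`, the number of `Ψ ∈ Υ` with `|Ψ| = i` equals the coefficient of `tⁱ`
in `∏_{k=1}^{n} (1 + t^k)`; this is the coefficientwise form of the identity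
`Σ_{Ψ ∈ Υ} t^{|Ψ|} = ∏_{k=1}^{n} (1 + t^k)`. -/
theorem stmt12 (n : ℕ) (hn : 1 ≤ n) (i : ℕ) :
    (Set.ncard {Ψ | Ψ ∈ Upsilon n ∧ Ψ.ncard = i} : ℤ) =
      (∏ k ∈ Finset.range n, (1 + (X : ℤ[X]) ^ (k + 1))).coeff i := by
  rw [count_eq, coeff_eq]
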